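/- For n ≥ 1, p+q = n, and b ∈ ℂ nonzero, define α : su(p+1,q) → su(p+1,q+1) by sending the block matrix (a, −X̄ᵀI ; X, A) (with a ∈ iℝ the negative trace of A ∈ u(p,q), X ∈ ℂⁿ, I the signature matrix diag(1_p, −1_q)) to the (1,n,1)-block matrix ((1/2)a, −(1/(2b))X̄ᵀI, (1/(4b b̄))a ; bX, A, (1/(2b̄))X ; b b̄ a, −b̄ X̄ᵀ I, (1/2)a). Then α is an injective Lie algebra homomorphism from su(p+1,q) into su(p+1,q+1). -/
import Mathlib


open Complex Matrix

/-- Signature vector of `su(p,q)` type forms: `+1` on the first `p`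
coordinates, `−1` on the remaining ones. -/
def suSig (p n : ℕ) : Fin n → ℂ := fun i => if (i : ℕ) < p then 1 else -1

/-- The hermitian form matrix of `su(p+1,q)` in `(1,n)`-block form:
`diag(1, I)` with `I = diag(1_p, −1_q)`. -/
noncomputable def suFormSmall (p n : ℕ) : Matrix (Unit ⊕ Fin n) (Unit ⊕ Fin n) ℂ :=
  Matrix.diagonal (fun r => match r with
    | .inl _ => 1
    | .inr i => suSig p n i)

/-- The hermitian form matrix of `su(p+1,q+1)` in `(1,n,1)`-block form:
`(x₀,x_i,x_{n+1})·(y₀,y_i,y_{n+1}) = x₀ȳ_{n+1} + x_{n+1}ȳ₀ + Σ_{i≤p} x_iȳ_i −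
Σ_{i>p} x_iȳ_i`. -/
noncomputable def suFormBig (p n : ℕ) :
    Matrix (Unit ⊕ (Fin n ⊕ Unit)) (Unit ⊕ (Fin n ⊕ Unit)) ℂ :=
  fun r c =>
    match r, c with
    | .inl _, .inr (.inr _) => 1
    | .inr (.inr _), .inl _ => 1
    | .inr (.inl i), .inr (.inl j) => if i = j then suSig p n i else 0
    | _, _ => 0

/-- The extension map `α` of the CR example: for
`M = (a, −X̄ᵀI ; X, A) ∈ su(p+1,q)` (in `(1,n)`-block form) the image is the
`(1,n,1)`-block matrix
`((1/2)a, −(1/(2b))X̄ᵀI, (1/(4bb̄))a ; bX, A, (1/(2b̄))X ; bb̄a, −b̄X̄ᵀI, (1/2)a)`. -/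
noncomputable def crAlpha (p n : ℕ) (b : ℂ)
    (M : Matrix (Unit ⊕ Fin n) (Unit ⊕ Fin n) ℂ) :
    Matrix (Unit ⊕ (Fin n ⊕ Unit)) (Unit ⊕ (Fin n ⊕ Unit)) ℂ :=
  fun r c =>
    match r, c with
    | .inl _, .inl _ => (1 / 2) * M (.inl ()) (.inl ())
    | .inl _, .inr (.inl j) =>
        -(1 / (2 * b)) * (starRingEnd ℂ) (M (.inr j) (.inl ())) * suSig p n j
    | .inl _, .inr (.inr _) => (1 / (4 * b * (starRingEnd ℂ) b)) * M (.inl ()) (.inl ())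
    | .inr (.inl i), .inl _ => b * M (.inr i) (.inl ())
    | .inr (.inl i), .inr (.inl j) => M (.inr i) (.inr j)
    | .inr (.inl i), .inr (.inr _) => (1 / (2 * (starRingEnd ℂ) b)) * M (.inr i) (.inl ())
    | .inr (.inr _), .inl _ => b * (starRingEnd ℂ) b * M (.inl ()) (.inl ())
    | .inr (.inr _), .inr (.inl j) =>
        -(starRingEnd ℂ) b * (starRingEnd ℂ) (M (.inr j) (.inl ())) * suSig p n j
    | .inr (.inr _), .inr (.inr _) => (1 / 2) * M (.inl ()) (.inl ())

set_option linter.unusedVariables false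

noncomputable def crV (p n : ℕ) (b : ℂ) : Matrix (Unit ⊕ (Fin n ⊕ Unit)) (Unit ⊕ Fin n) ℂ :=
  fun r c => match r, c with
  | .inl _, .inl _ => 1/(2*b)
  | .inr (.inl i), .inr j => if i = j then 1 else 0
  | .inr (.inr _), .inl _ => (starRingEnd ℂ) b
  | _, _ => 0

noncomputable def crW (p n : ℕ) (b : ℂ) : Matrix (Unit ⊕ Fin n) (Unit ⊕ (Fin n ⊕ Unit)) ℂ :=
  fun r c => match r, c with
  | .inl _, .inl _ => b
  | .inl _, .inr (.inr _) => 1/(2*(starRingEnd ℂ) b)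
  | .inr i, .inr (.inl j) => if i = j then 1 else 0
  | _, _ => 0

lemma crWV (p n : ℕ) (b : ℂ) (hb : b ≠ 0) : crW p n b * crV p n b = 1 := by
  have hb' : (starRingEnd ℂ) b ≠ 0 := by simpa using hb
  ext r c
  rcases r with _ | i <;> rcases c with _ | j <;>
    simp [crW, crV, Matrix.mul_apply, Fintype.sum_sum_type, Matrix.one_apply] <;>
    field_simp <;> ring

lemma su_rel (p n : ℕ) (M : Matrix (Unit ⊕ Fin n) (Unit ⊕ Fin n) ℂ)
    (hM : M * suFormSmall p n + suFormSmall p n * Mᴴ = 0) (j : Fin n) :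
    M (.inl ()) (.inr j) =
      -((starRingEnd ℂ) (M (.inr j) (.inl ())) * suSig p n j) := by
  have h := congrFun (congrFun hM (.inl ())) (.inr j)
  simp [Matrix.add_apply, Matrix.mul_apply, suFormSmall, Fintype.sum_sum_type,
    Matrix.diagonal, conjTranspose_apply] at h
  by_cases hj : (j : ℕ) < p <;> simp [suSig, hj] at h ⊢ <;> [linear_combination h; linear_combination -h]

lemma crAlpha_eq (p n : ℕ) (b : ℂ) (hb : b ≠ 0)
    (M : Matrix (Unit ⊕ Fin n) (Unit ⊕ Fin n) ℂ)
    (hM : M * suFormSmall p n + suFormSmall p n * Mᴴ = 0) :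
    crAlpha p n b M = crV p n b * M * crW p n b := by
  have hb' : (starRingEnd ℂ) b ≠ 0 := by simpa using hb
  ext r c
  have hrel := su_rel p n M hM
  rcases r with _ | (i | _) <;> rcases c with _ | (j | _) <;>
    simp [crAlpha, crV, crW, Matrix.mul_apply, Fintype.sum_sum_type] <;>
    (try rw [hrel]) <;> (try field_simp) <;> (try ring) <;> tauto

lemma crW_form (p n : ℕ) (b : ℂ) :
    crW p n b * suFormBig p n = suFormSmall p n * (crV p n b)ᴴ := by
  ext r c
  rcases r with _ | i <;> rcases c with _ | (j | _) <;>
    simp [crW, crV, suFormBig, suFormSmall, Matrix.mul_apply, Fintype.sum_sum_type,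
      Matrix.diagonal, conjTranspose_apply, one_div, map_inv₀, Complex.conj_ofNat,
      mul_comm] <;> (try ring) <;> aesop

lemma crV_form (p n : ℕ) (b : ℂ) :
    suFormBig p n * (crW p n b)ᴴ = crV p n b * suFormSmall p n := by
  ext r c
  rcases r with _ | (i | _) <;> rcases c with _ | j <;>
    simp [crW, crV, suFormBig, suFormSmall, Matrix.mul_apply, Fintype.sum_sum_type,
      Matrix.diagonal, conjTranspose_apply, one_div, map_inv₀, Complex.conj_ofNat,
      mul_comm] <;> (try ring) <;> aesop

/-- For `n ≥ 1`, `p + q = n` and a nonzero `b ∈ ℂ`, the map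
`α` above is an injective Lie algebra homomorphism from `su(p+1,q)` into
`su(p+1,q+1)`. -/
theorem crAlpha_injective_lieHom (p q n : ℕ) (hpq : p + q = n) (hn : 1 ≤ n)
    (b : ℂ) (hb : b ≠ 0) :
    (∀ M N : Matrix (Unit ⊕ Fin n) (Unit ⊕ Fin n) ℂ,
        crAlpha p n b (M + N) = crAlpha p n b M + crAlpha p n b N) ∧
    (∀ (c : ℝ) (M : Matrix (Unit ⊕ Fin n) (Unit ⊕ Fin n) ℂ),
        crAlpha p n b (c • M) = c • crAlpha p n b M) ∧
    (∀ M : Matrix (Unit ⊕ Fin n) (Unit ⊕ Fin n) ℂ,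
        M * suFormSmall p n + suFormSmall p n * Mᴴ = 0 → M.trace = 0 →
          crAlpha p n b M * suFormBig p n + suFormBig p n * (crAlpha p n b M)ᴴ = 0 ∧
          (crAlpha p n b M).trace = 0) ∧
    (∀ M N : Matrix (Unit ⊕ Fin n) (Unit ⊕ Fin n) ℂ,
        M * suFormSmall p n + suFormSmall p n * Mᴴ = 0 → M.trace = 0 →
        N * suFormSmall p n + suFormSmall p n * Nᴴ = 0 → N.trace = 0 →
          crAlpha p n b (M * N - N * M) =
            crAlpha p n b M * crAlpha p n b N - crAlpha p n b N * crAlpha p n b M) ∧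
    (∀ M : Matrix (Unit ⊕ Fin n) (Unit ⊕ Fin n) ℂ,
        M * suFormSmall p n + suFormSmall p n * Mᴴ = 0 → M.trace = 0 →
          crAlpha p n b M = 0 → M = 0) := by
  have hWV := crWV p n b hb
  have hWV' : ∀ X : Matrix (Unit ⊕ Fin n) (Unit ⊕ (Fin n ⊕ Unit)) ℂ,
      crW p n b * (crV p n b * X) = X := by
    intro X; rw [← Matrix.mul_assoc, hWV, Matrix.one_mul]
  refine ⟨?_, ?_, ?_, ?_, ?_⟩
  · intro M N
    ext r c
    rcases r with _ | (i | _) <;> rcases c with _ | (j | _) <;>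
      simp [crAlpha, Matrix.add_apply, map_add] <;> ring
  · intro c M
    ext r c'
    rcases r with _ | (i | _) <;> rcases c' with _ | (j | _) <;>
      simp [crAlpha, Matrix.smul_apply, Complex.real_smul, mul_comm, mul_left_comm,
        Complex.conj_ofReal] <;> (try ring) <;> tauto
  · intro M hM htr
    have hα := crAlpha_eq p n b hb M hM
    constructor
    · rw [hα]
      have e1 : crV p n b * M * crW p n b * suFormBig p n =
          crV p n b * (M * (suFormSmall p n * (crV p n b)ᴴ)) := by
        rw [Matrix.mul_assoc (crV p n b * M), crW_form, Matrix.mul_assoc]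
      have e2 : suFormBig p n * (crV p n b * M * crW p n b)ᴴ =
          crV p n b * (suFormSmall p n * (Mᴴ * (crV p n b)ᴴ)) := by
        rw [conjTranspose_mul, conjTranspose_mul, ← Matrix.mul_assoc, crV_form,
          Matrix.mul_assoc]
      rw [e1, e2, ← Matrix.mul_add]
      have e3 : M * (suFormSmall p n * (crV p n b)ᴴ)
            + suFormSmall p n * (Mᴴ * (crV p n b)ᴴ) =
          (M * suFormSmall p n + suFormSmall p n * Mᴴ) * (crV p n b)ᴴ := by
        rw [Matrix.add_mul, Matrix.mul_assoc, Matrix.mul_assoc]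
      rw [e3, hM]
      simp
    · rw [hα, Matrix.trace_mul_comm, ← Matrix.mul_assoc, hWV, Matrix.one_mul, htr]
  · intro M N hM htM hN htN
    have hM' : suFormSmall p n * Mᴴ = -(M * suFormSmall p n) :=
      eq_neg_of_add_eq_zero_right hM
    have hN' : suFormSmall p n * Nᴴ = -(N * suFormSmall p n) :=
      eq_neg_of_add_eq_zero_right hN
    have hMN : (M * N - N * M) * suFormSmall p n
        + suFormSmall p n * (M * N - N * M)ᴴ = 0 := by
      have e4 : suFormSmall p n * (M * N - N * M)ᴴ =
          N * (M * suFormSmall p n) - M * (N * suFormSmall p n) := by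
        rw [conjTranspose_sub, conjTranspose_mul, conjTranspose_mul, Matrix.mul_sub,
          ← Matrix.mul_assoc, ← Matrix.mul_assoc, hM', hN', Matrix.neg_mul,
          Matrix.neg_mul, Matrix.mul_assoc, Matrix.mul_assoc, hM', hN']
        simp only [Matrix.mul_neg, sub_neg_eq_add, neg_add_eq_sub]
      rw [e4]
      simp only [Matrix.sub_mul, Matrix.mul_assoc]
      abel
    rw [crAlpha_eq p n b hb _ hMN, crAlpha_eq p n b hb _ hM, crAlpha_eq p n b hb _ hN]
    simp only [Matrix.sub_mul, Matrix.mul_sub, Matrix.mul_assoc, hWV']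
  · intro M hM htr h0
    have h1 : crV p n b * M * crW p n b = 0 := (crAlpha_eq p n b hb M hM).symm.trans h0
    have h2 : crW p n b * (crV p n b * M * crW p n b) * crV p n b = M := by
      simp only [← Matrix.mul_assoc]
      rw [hWV, Matrix.one_mul, Matrix.mul_assoc, hWV, Matrix.mul_one]
    rw [← h2, h1]
    simp
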